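/- Let $T>0$, $H\in(\frac{1}{2},1)$, $\delta\in(0,\frac{1}{2})$ with $\delta < H$, $\epsilon>0$, $y\in\mathbb{R}$, $K_1,K_2,d_1,d_2\ge 0$. Let $b:\mathbb{R}\to\mathbb{R}$ be differentiable with $|b'|\le K_1$ and $|b'(u)-b'(v)|\le K_2|u-v|$ for all $u,v$. Let $B:[0,T]\to\mathbb{R}$ be continuous with $B(0)=0$ and finite $(H-\delta)$-H\"older seminorm $\|B\|_{H-\delta}$, and let $X:[0,T]\to\mathbb{R}$ satisfy $|X_t-X_s| \le d_1|t-s| + d_2\|B\|_\infty|t-s| + |B_t-B_s|$ for all $s,t\in[0,T]$. Set $X^\epsilon_t = X_t + \frac{T-t}{T}\epsilon y$ and $\eta_t = b(X_t)-b(X^\epsilon_t)-\frac{\epsilon}{T}y$. Then for every $s\in[0,T]$, $\Big|\int_0^s \frac{\eta_s-\eta_r}{(s-r)^{\frac{1}{2}+H}}\,dr\Big| \le \frac{Td_1K_2+K_2|y|\epsilon+K_1}{(\frac{3}{2}-H)T}\,|y|\epsilon\, s^{\frac{3}{2}-H} + \frac{d_2K_2}{\frac{3}{2}-H}\,|y|\epsilon\,\|B\|_\infty\,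 s^{\frac{3}{2}-H} + \frac{K_2}{\frac{1}{2}-\delta}\,|y|\epsilon\, s^{\frac{1}{2}-\delta}\,\|B\|_{H-\delta}$. -/

import Mathlib

open MeasureTheory Set

/-- The sup norm `‖f‖_∞ = sup_{0 ≤ t ≤ T} |f t|` of a path on `[0,T]`. -/
noncomputable def supN {E : Type*} [NormedAddCommGroup E] (T : ℝ) (f : ℝ → E) : ℝ :=
  ⨆ t : Icc (0:ℝ) T, ‖f (t : ℝ)‖

/-- The `λ`-Hölder seminorm `‖f‖_λ = sup_{0 ≤ s < t ≤ T} |f t - f s| / (t-s)^λ` of a path on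
`[0,T]` (the diagonal pairs contribute `0/0 = 0`, so the supremum is unchanged). -/
noncomputable def holderN {E : Type*} [NormedAddCommGroup E] (T lam : ℝ) (f : ℝ → E) : ℝ :=
  ⨆ p : Icc (0:ℝ) T × Icc (0:ℝ) T, ‖f (p.2 : ℝ) - f (p.1 : ℝ)‖ / |(p.2 : ℝ) - (p.1 : ℝ)| ^ lam

/-- Estimate of the term `I₃ = ∫_0^s (η_s - η_r)/(s-r)^{1/2+H} dr` in the proof of the Bismut
derivative formula for `H > 1/2`, where `η_t = b(X_t) - b(X^ε_t) - (ε/T) y` and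
`X^ε_t = X_t + ((T-t)/T) ε y`. -/
theorem stmt_7 (T H δ ε y K₁ K₂ d₁ d₂ : ℝ)
    (hT : 0 < T) (hH : H ∈ Ioo (1/2 : ℝ) 1) (hδ : δ ∈ Ioo (0:ℝ) (1/2)) (hδH : δ < H)
    (hε : 0 < ε) (hK₁ : 0 ≤ K₁) (hK₂ : 0 ≤ K₂) (hd₁ : 0 ≤ d₁) (hd₂ : 0 ≤ d₂)
    (b : ℝ → ℝ) (hb : Differentiable ℝ b)
    (hb1 : ∀ u, |deriv b u| ≤ K₁) (hb2 : ∀ u v, |deriv b u - deriv b v| ≤ K₂ * |u - v|)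
    (B : ℝ → ℝ) (hBc : ContinuousOn B (Icc 0 T)) (hB0 : B 0 = 0)
    (hBβ : BddAbove (Set.range fun p : Icc (0:ℝ) T × Icc (0:ℝ) T =>
      |B (p.2 : ℝ) - B (p.1 : ℝ)| / |(p.2 : ℝ) - (p.1 : ℝ)| ^ (H - δ)))
    (X : ℝ → ℝ)
    (hX : ∀ s ∈ Icc (0:ℝ) T, ∀ t ∈ Icc (0:ℝ) T,
      |X t - X s| ≤ d₁ * |t - s| + d₂ * supN T B * |t - s| + |B t - B s|)
    (Xε η : ℝ → ℝ)
    (hXε : ∀ t, Xε t = X t + ((T - t) / T) * ε * y)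
    (hη : ∀ t, η t = b (X t) - b (Xε t) - (ε / T) * y) :
    ∀ s ∈ Icc (0:ℝ) T,
      |∫ r in (0:ℝ)..s, (η s - η r) / (s - r) ^ ((1:ℝ)/2 + H)| ≤
        (T * d₁ * K₂ + K₂ * |y| * ε + K₁) / ((3/2 - H) * T) * |y| * ε * s ^ ((3:ℝ)/2 - H)
        + d₂ * K₂ / (3/2 - H) * |y| * ε * supN T B * s ^ ((3:ℝ)/2 - H)
        + K₂ / (1/2 - δ) * |y| * ε * s ^ ((1:ℝ)/2 - δ) * holderN T (H - δ) B := by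
  obtain ⟨hH1, hH2⟩ := hH
  obtain ⟨hδ1, hδ2⟩ := hδ
  intro s hs
  obtain ⟨hs0, hsT⟩ := hs
  -- Lipschitz property of b
  have lip : ∀ u v : ℝ, |b u - b v| ≤ K₁ * |u - v| := by
    intro u v
    have := Convex.norm_image_sub_le_of_norm_deriv_le (f := b)
      (fun x _ => hb x) (fun x _ => hb1 x) convex_univ (mem_univ v) (mem_univ u)
    simpa [Real.norm_eq_abs] using this
  -- double increment bound
  have dbl : ∀ cc u v : ℝ, |(b (u + cc) - b u) - (b (v + cc) - b v)| ≤ K₂ * |cc| * |u - v| := by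
    intro cc u v
    have hderiv : ∀ x : ℝ, HasDerivAt (fun t => b (t + cc) - b t)
        (deriv b (x + cc) - deriv b x) x := by
      intro x
      have h1 : HasDerivAt (fun t : ℝ => b (t + cc)) (deriv b (x + cc)) x := by
        exact HasDerivAt.comp_add_const x cc ((hb (x + cc)).hasDerivAt)
      exact h1.sub (hb x).hasDerivAt
    have := Convex.norm_image_sub_le_of_norm_hasDerivWithin_le
      (f := fun t => b (t + cc) - b t) (f' := fun x => deriv b (x + cc) - deriv b x)
      (fun x _ => (hderiv x).hasDerivWithinAt)
      (fun x _ => by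
        have := hb2 (x + cc) x
        simpa [Real.norm_eq_abs, add_sub_cancel_left] using this)
      convex_univ (mem_univ v) (mem_univ u)
    simpa [Real.norm_eq_abs] using this
  -- Hölder bound for B
  have hBβ' : BddAbove (Set.range fun p : Icc (0:ℝ) T × Icc (0:ℝ) T =>
      ‖B (p.2 : ℝ) - B (p.1 : ℝ)‖ / |(p.2 : ℝ) - (p.1 : ℝ)| ^ (H - δ)) := by
    simpa [Real.norm_eq_abs] using hBβ
  have hhol0 : 0 ≤ holderN T (H - δ) B :=
    Real.iSup_nonneg fun p => div_nonneg (norm_nonneg _) (Real.rpow_nonneg (abs_nonneg _) _)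
  have hsup0 : 0 ≤ supN T B := Real.iSup_nonneg fun t => norm_nonneg _
  have hol : ∀ u ∈ Icc (0:ℝ) T, ∀ v ∈ Icc (0:ℝ) T,
      |B v - B u| ≤ holderN T (H - δ) B * |v - u| ^ (H - δ) := by
    intro u hu v hv
    rcases eq_or_ne v u with rfl | hne
    · simp [Real.zero_rpow (by linarith : H - δ ≠ 0)]
    · have key := le_ciSup hBβ' (⟨⟨u, hu⟩, ⟨v, hv⟩⟩ : Icc (0:ℝ) T × Icc (0:ℝ) T)
      have hpos : (0:ℝ) < |v - u| ^ (H - δ) :=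
        Real.rpow_pos_of_pos (abs_pos.mpr (sub_ne_zero.mpr hne)) _
      rw [holderN] at *
      calc |B v - B u| = |B v - B u| / |v - u| ^ (H - δ) * |v - u| ^ (H - δ) := by
            field_simp
        _ ≤ _ := by
            apply mul_le_mul_of_nonneg_right _ hpos.le
            simpa [Real.norm_eq_abs] using key
  -- increment bound for η
  set c : ℝ → ℝ := fun t => ((T - t) / T) * ε * y with hc
  have ηbound : ∀ r ∈ Icc (0:ℝ) T,
      |η s - η r| ≤ (K₁ * (ε * |y|) / T + K₂ * (ε * |y|) * d₁
          + K₂ * (ε * |y|) * d₂ * supN T B) * |s - r|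
        + K₂ * (ε * |y|) * holderN T (H - δ) B * |s - r| ^ (H - δ) := by
    intro r hr
    have hcr : |c r| ≤ ε * |y| := by
      rw [hc]
      simp only [abs_mul]
      have h1 : |(T - r) / T| ≤ 1 := by
        rw [abs_div, abs_of_pos hT, div_le_one hT, abs_le]
        constructor <;> [linarith [hr.2]; linarith [hr.1]]
      calc |(T - r) / T| * |ε| * |y| ≤ 1 * |ε| * |y| := by
            apply mul_le_mul_of_nonneg_right (mul_le_mul_of_nonneg_right h1 (abs_nonneg _))
              (abs_nonneg _)
        _ = ε * |y| := by rw [one_mul, abs_of_pos hε]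
    have e1 : η s - η r = (b (X s + c r) - b (X s + c s)) -
        ((b (X s + c r) - b (X s)) - (b (X r + c r) - b (X r))) := by
      rw [hη s, hη r, hXε s, hXε r, hc]; ring
    have t1 : |b (X s + c r) - b (X s + c s)| ≤ K₁ * (ε * |y|) / T * |s - r| := by
      have := lip (X s + c r) (X s + c s)
      have e2 : X s + c r - (X s + c s) = (s - r) / T * ε * y := by rw [hc]; ring
      rw [e2] at this
      calc |b (X s + c r) - b (X s + c s)| ≤ K₁ * |(s - r) / T * ε * y| := this
        _ = K₁ * (ε * |y|) / T * |s - r| := by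
            rw [abs_mul, abs_mul, abs_div, abs_of_pos hT, abs_of_pos hε]
            ring
    have t2 : |(b (X s + c r) - b (X s)) - (b (X r + c r) - b (X r))| ≤
        K₂ * (ε * |y|) * |X s - X r| := by
      calc |(b (X s + c r) - b (X s)) - (b (X r + c r) - b (X r))|
          ≤ K₂ * |c r| * |X s - X r| := dbl (c r) (X s) (X r)
        _ ≤ K₂ * (ε * |y|) * |X s - X r| := by
            apply mul_le_mul_of_nonneg_right (mul_le_mul_of_nonneg_left hcr hK₂) (abs_nonneg _)
    have tX : |X s - X r| ≤ d₁ * |s - r| + d₂ * supN T B * |s - r| + |B s - B r| :=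
      hX r hr s ⟨hs0, hsT⟩
    have tB : |B s - B r| ≤ holderN T (H - δ) B * |s - r| ^ (H - δ) := hol r hr s ⟨hs0, hsT⟩
    have habs : |η s - η r| ≤ |b (X s + c r) - b (X s + c s)| +
        |(b (X s + c r) - b (X s)) - (b (X r + c r) - b (X r))| := by
      rw [e1]; exact abs_sub _ _
    have hK2e : 0 ≤ K₂ * (ε * |y|) :=
      mul_nonneg hK₂ (mul_nonneg hε.le (abs_nonneg _))
    have m1 := mul_le_mul_of_nonneg_left tX hK2e
    have m2 := mul_le_mul_of_nonneg_left tB hK2e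
    linarith
  -- constants
  set A : ℝ := (T * d₁ * K₂ + K₂ * |y| * ε + K₁) / T * |y| * ε
      + d₂ * K₂ * |y| * ε * supN T B with hA
  set C : ℝ := K₂ * |y| * ε * holderN T (H - δ) B with hC
  clear_value A C
  have hA0 : 0 ≤ A := by
    rw [hA]
    apply add_nonneg
    · apply mul_nonneg (mul_nonneg _ (abs_nonneg _)) hε.le
      apply div_nonneg _ hT.le
      have h1 : 0 ≤ K₂ * |y| * ε := mul_nonneg (mul_nonneg hK₂ (abs_nonneg _)) hε.le
      have h2 : 0 ≤ T * d₁ * K₂ := mul_nonneg (mul_nonneg hT.le hd₁) hK₂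
      linarith
    · exact mul_nonneg (mul_nonneg (mul_nonneg (mul_nonneg hd₂ hK₂) (abs_nonneg _)) hε.le) hsup0
  have hC0 : 0 ≤ C := by
    rw [hC]
    exact mul_nonneg (mul_nonneg (mul_nonneg hK₂ (abs_nonneg _)) hε.le) hhol0
  -- pointwise bound of the integrand
  have key : ∀ r ∈ Ioc (0:ℝ) s,
      ‖(η s - η r) / (s - r) ^ ((1:ℝ)/2 + H)‖ ≤
        A * (s - r) ^ ((1:ℝ)/2 - H) + C * (s - r) ^ (-(1/2 + δ) : ℝ) := by
    intro r hr
    rcases eq_or_lt_of_le hr.2 with rfl | hrs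
    · rw [sub_self, sub_self, Real.norm_eq_abs,
        Real.zero_rpow (by linarith : (1:ℝ)/2 + H ≠ 0),
        Real.zero_rpow (by linarith : (1:ℝ)/2 - H ≠ 0),
        Real.zero_rpow (by linarith : (-(1/2 + δ) : ℝ) ≠ 0), div_zero, abs_zero,
        mul_zero, mul_zero, add_zero]
    · have hpos : 0 < s - r := by linarith
      have hq : (0:ℝ) < (s - r) ^ ((1:ℝ)/2 + H) := Real.rpow_pos_of_pos hpos _
      rw [Real.norm_eq_abs, abs_div, abs_of_pos hq, div_le_iff₀ hq]
      have erw : (A * (s - r) ^ ((1:ℝ)/2 - H) + C * (s - r) ^ (-(1/2 + δ) : ℝ)) *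
          (s - r) ^ ((1:ℝ)/2 + H) = A * (s - r) + C * (s - r) ^ (H - δ) := by
        rw [add_mul, mul_assoc, mul_assoc, ← Real.rpow_add hpos, ← Real.rpow_add hpos]
        rw [show (1:ℝ)/2 - H + (1/2 + H) = 1 by ring,
          show (-(1/2 + δ) : ℝ) + (1/2 + H) = H - δ by ring, Real.rpow_one]
      rw [erw]
      have hrT : r ∈ Icc (0:ℝ) T := ⟨hr.1.le, le_trans hr.2 hsT⟩
      have h1 := ηbound r hrT
      rw [abs_of_pos hpos] at h1
      have hcoef : K₁ * (ε * |y|) / T + K₂ * (ε * |y|) * d₁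
          + K₂ * (ε * |y|) * d₂ * supN T B ≤ A := by
        rw [hA]
        have hy2 : 0 ≤ K₂ * |y| * ε * (|y| * ε) / T :=
          div_nonneg (mul_nonneg (mul_nonneg (mul_nonneg hK₂ (abs_nonneg _)) hε.le)
            (mul_nonneg (abs_nonneg _) hε.le)) hT.le
        have : (T * d₁ * K₂ + K₂ * |y| * ε + K₁) / T * |y| * ε =
            K₁ * (ε * |y|) / T + K₂ * (ε * |y|) * d₁ + K₂ * |y| * ε * (|y| * ε) / T := by
          field_simp; ring
        linarith
      have hC' : K₂ * (ε * |y|) * holderN T (H - δ) B = C := by rw [hC]; ring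
      rw [hC'] at h1
      have h2 := mul_le_mul_of_nonneg_right hcoef hpos.le
      linarith
  -- integrability of the bounding function
  have int1 : IntervalIntegrable (fun r => (s - r) ^ ((1:ℝ)/2 - H)) volume 0 s := by
    have := (intervalIntegral.intervalIntegrable_rpow' (a := 0) (b := s)
      (r := (1:ℝ)/2 - H) (by linarith)).comp_sub_left s
    simpa using this.symm
  have int2 : IntervalIntegrable (fun r => (s - r) ^ (-(1/2 + δ) : ℝ)) volume 0 s := by
    have := (intervalIntegral.intervalIntegrable_rpow' (a := 0) (b := s)
      (r := (-(1/2 + δ) : ℝ)) (by linarith)).comp_sub_left s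
    simpa using this.symm
  -- value of the bounding integral
  have calcInt : ∀ p : ℝ, -1 < p →
      ∫ r in (0:ℝ)..s, (s - r) ^ p = s ^ (p + 1) / (p + 1) := by
    intro p hp
    rw [intervalIntegral.integral_comp_sub_left (a := 0) (b := s) (fun x => x ^ p) s]
    simp only [sub_self, sub_zero]
    rw [(open intervalIntegral in integral_rpow) (Or.inl hp),
      Real.zero_rpow (by linarith : p + 1 ≠ 0)]
    ring
  have eq2 : ∫ r in (0:ℝ)..s,
      (A * (s - r) ^ ((1:ℝ)/2 - H) + C * (s - r) ^ (-(1/2 + δ) : ℝ)) =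
      A * (s ^ ((3:ℝ)/2 - H) / (3/2 - H)) + C * (s ^ ((1:ℝ)/2 - δ) / (1/2 - δ)) := by
    rw [intervalIntegral.integral_add (int1.const_mul A) (int2.const_mul C),
      intervalIntegral.integral_const_mul, intervalIntegral.integral_const_mul,
      calcInt _ (by linarith), calcInt _ (by linarith),
      show (1:ℝ)/2 - H + 1 = 3/2 - H by ring,
      show (-(1/2 + δ) : ℝ) + 1 = 1/2 - δ by ring]
  have hbnd : |∫ r in (0:ℝ)..s, (η s - η r) / (s - r) ^ ((1:ℝ)/2 + H)| ≤
      |∫ r in (0:ℝ)..s, (A * (s - r) ^ ((1:ℝ)/2 - H) + C * (s - r) ^ (-(1/2 + δ) : ℝ))| := by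
    rw [← Real.norm_eq_abs]
    apply intervalIntegral.norm_integral_le_abs_of_norm_le _
      ((int1.const_mul A).add (int2.const_mul C))
    apply ae_restrict_of_forall_mem measurableSet_uIoc
    intro r hr
    rw [uIoc_of_le hs0] at hr
    exact key r hr
  have hnn : 0 ≤ A * (s ^ ((3:ℝ)/2 - H) / (3/2 - H)) + C * (s ^ ((1:ℝ)/2 - δ) / (1/2 - δ)) := by
    apply add_nonneg
    · exact mul_nonneg hA0 (div_nonneg (Real.rpow_nonneg hs0 _) (by linarith))
    · exact mul_nonneg hC0 (div_nonneg (Real.rpow_nonneg hs0 _) (by linarith))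
  rw [eq2, abs_of_nonneg hnn] at hbnd
  have hT' : T ≠ 0 := ne_of_gt hT
  have h32 : (3/2 - H : ℝ) ≠ 0 := by linarith
  have h12 : (1/2 - δ : ℝ) ≠ 0 := by linarith
  have final : A * (s ^ ((3:ℝ)/2 - H) / (3/2 - H)) + C * (s ^ ((1:ℝ)/2 - δ) / (1/2 - δ)) =
      (T * d₁ * K₂ + K₂ * |y| * ε + K₁) / ((3/2 - H) * T) * |y| * ε * s ^ ((3:ℝ)/2 - H)
      + d₂ * K₂ / (3/2 - H) * |y| * ε * supN T B * s ^ ((3:ℝ)/2 - H)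
      + K₂ / (1/2 - δ) * |y| * ε * s ^ ((1:ℝ)/2 - δ) * holderN T (H - δ) B := by
    rw [hA, hC]
    simp only [div_eq_mul_inv, mul_inv]
    ring
  rw [final] at hbnd
  exact hbnd
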